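/- Let $F(x,y) = \sqrt{x(x+y)} + \sqrt{(1-x)(1-x-y)} - 1$. For any $y \in (0, 3/4)$, the maximum of $F(x,y)$ over $x \in [0, 1-y]$ is at most $-\frac{1}{16} y^2$. -/
import Mathlib


open Real

/-- For `0 < y < 3/4`, the maximum of `F(x,y) = √(x(x+y)) + √((1-x)(1-x-y)) - 1`
over `x ∈ [0, 1-y]` is at most `-y²/16`. -/
theorem F_max_le (y : ℝ) (hy0 : 0 < y) (hy1 : y < 3 / 4) :
    ∀ x ∈ Set.Icc (0 : ℝ) (1 - y),
      Real.sqrt (x * (x + y)) + Real.sqrt ((1 - x) * (1 - x - y)) - 1 ≤ -(1 / 16) * y ^ 2 := by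
  intro x hx
  obtain ⟨hx0, hx1⟩ := hx
  set a : ℝ := x + y / 2 with ha
  set b : ℝ := 1 - x - y / 2 with hb
  have ha0 : 0 < a := by simp only [ha]; linarith
  have hb0 : 0 < b := by simp only [hb]; linarith
  clear_value a b
  have hay : y / 2 ≤ a := by simp only [ha]; linarith
  have hby : y / 2 ≤ b := by simp only [hb]; linarith
  have hta : 0 ≤ a - y ^ 2 / (8 * a) := by
    rw [sub_nonneg, div_le_iff₀ (by linarith)]
    nlinarith [mul_le_mul hay hay (by linarith) ha0.le]
  have htb : 0 ≤ b - y ^ 2 / (8 * b) := by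
    rw [sub_nonneg, div_le_iff₀ (by linarith)]
    nlinarith [mul_le_mul hby hby (by linarith) hb0.le]
  have h1 : Real.sqrt (x * (x + y)) ≤ a - y ^ 2 / (8 * a) := by
    have hle : x * (x + y) ≤ (a - y ^ 2 / (8 * a)) ^ 2 := by
      have hexp : (a - y ^ 2 / (8 * a)) ^ 2 = a ^ 2 - y ^ 2 / 4 + y ^ 4 / (64 * a ^ 2) := by
        field_simp; ring
      have he : x * (x + y) = a ^ 2 - y ^ 2 / 4 := by simp only [ha]; ring
      rw [hexp, he]
      have : (0:ℝ) ≤ y ^ 4 / (64 * a ^ 2) := by positivity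
      linarith
    calc Real.sqrt (x * (x + y)) ≤ Real.sqrt ((a - y ^ 2 / (8 * a)) ^ 2) :=
          Real.sqrt_le_sqrt hle
      _ = a - y ^ 2 / (8 * a) := Real.sqrt_sq hta
  have h2 : Real.sqrt ((1 - x) * (1 - x - y)) ≤ b - y ^ 2 / (8 * b) := by
    have hle : (1 - x) * (1 - x - y) ≤ (b - y ^ 2 / (8 * b)) ^ 2 := by
      have hexp : (b - y ^ 2 / (8 * b)) ^ 2 = b ^ 2 - y ^ 2 / 4 + y ^ 4 / (64 * b ^ 2) := by
        field_simp; ring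
      have he : (1 - x) * (1 - x - y) = b ^ 2 - y ^ 2 / 4 := by simp only [hb]; ring
      rw [hexp, he]
      have : (0:ℝ) ≤ y ^ 4 / (64 * b ^ 2) := by positivity
      linarith
    calc Real.sqrt ((1 - x) * (1 - x - y)) ≤ Real.sqrt ((b - y ^ 2 / (8 * b)) ^ 2) :=
          Real.sqrt_le_sqrt hle
      _ = b - y ^ 2 / (8 * b) := Real.sqrt_sq htb
  have hab : a + b = 1 := by simp only [ha, hb]; ring
  have h3 : y ^ 2 / 16 ≤ y ^ 2 / (8 * a) := by
    rw [div_le_div_iff₀ (by norm_num) (by linarith)]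
    nlinarith
  have h4 : (0:ℝ) ≤ y ^ 2 / (8 * b) := by positivity
  linarith
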